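/- arXiv:2011.04742 — 7 statements merged into one kernel-verified Lean document; each statement's English description precedes it below -/
import Mathlib

section
/- Let (a_r) be a sequence of integers with a_1 = 0, and suppose P(x) = (1-x)^2 Σ_{r≥1} a_{r+1} x^r is a polynomial with a_{r+1} = a_r + K for all r ≥ e (e minimal with this property). Then P'(1) = e·K − a_e. -/
private lemma tele (A : ℕ → ℤ) (hA0 : A 0 = 0) (N : ℕ) :
    ∑ i ∈ Finset.range N, ((i : ℤ) + 1) * (A (i + 2) - 2 * A (i + 1) + A i)
      = (N : ℤ) * (A (N + 1) - A N) - A N := by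
  induction N with
  | zero => simp [hA0]
  | succ n ih =>
    rw [Finset.sum_range_succ, ih]
    push_cast
    ring

/-- If `a 1 = 0`, `p` is a polynomial whose power series equals
`(1-x)^2 Σ_{r≥1} a_{r+1} x^r`, and `a (r+1) = a r + K` for all `r ≥ e` with `e`
minimal such, then `p'(1) = e·K − a e`. -/
theorem stmt2 (a : ℕ → ℤ) (ha1 : a 1 = 0) (K : ℤ) (e : ℕ) (he1 : 1 ≤ e)
    (he : ∀ r ≥ e, a (r + 1) = a r + K)
    (hmin : ∀ s : ℕ, 1 ≤ s → (∀ r ≥ s, a (r + 1) = a r + K) → e ≤ s)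
    (p : Polynomial ℤ)
    (hp : (p : PowerSeries ℤ) =
      (1 - PowerSeries.X) ^ 2 * PowerSeries.mk (fun r => a (r + 1))) :
    (Polynomial.derivative p).eval 1 = (e : ℤ) * K - a e := by
  set A : ℕ → ℤ := fun n => if n = 0 then 0 else a n with hA
  have hA0 : A 0 = 0 := by simp [hA]
  have hApos : ∀ n : ℕ, 1 ≤ n → A n = a n := by
    intro n hn
    simp [hA, Nat.one_le_iff_ne_zero.mp hn]
  -- coefficients of p
  have key : ∀ n : ℕ, p.coeff (n + 1) = A (n + 2) - 2 * A (n + 1) + A n := by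
    intro n
    have h := congrArg (PowerSeries.coeff (R := ℤ) (n + 1)) hp
    have expand : (1 - PowerSeries.X) ^ 2 * PowerSeries.mk (fun r => a (r + 1)) =
        PowerSeries.mk (fun r => a (r + 1))
          - PowerSeries.X * PowerSeries.mk (fun r => a (r + 1))
          - PowerSeries.X * PowerSeries.mk (fun r => a (r + 1))
          + PowerSeries.X ^ 2 * PowerSeries.mk (fun r => a (r + 1)) := by ring
    rw [expand, map_add, map_sub, map_sub, PowerSeries.coeff_succ_X_mul,
      PowerSeries.coeff_X_pow_mul', Polynomial.coeff_coe, PowerSeries.coeff_mk,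
      PowerSeries.coeff_mk] at h
    match n with
    | 0 =>
      simp only [PowerSeries.coeff_mk] at h
      simpa [hA, ha1] using h
    | m + 1 =>
      have h2 : (2 : ℕ) ≤ m + 1 + 1 := by omega
      rw [if_pos h2, PowerSeries.coeff_mk] at h
      have e1 : m + 1 + 1 - 2 = m := by omega
      rw [e1] at h
      rw [h, hApos _ (by omega), hApos _ (by omega), hApos _ (by omega)]
      ring_nf
  -- degree bound
  have hdeg : p.natDegree ≤ e := by
    refine Polynomial.natDegree_le_iff_coeff_eq_zero.mpr fun N hN => ?_
    obtain ⟨n, rfl⟩ : ∃ n, N = n + 1 := ⟨N - 1, by omega⟩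
    have hne : e ≤ n := by omega
    rw [key n, hApos _ (by omega), hApos _ (by omega), hApos _ (by omega),
      he (n + 1) (by omega), he n hne]
    ring
  have hdlt : (Polynomial.derivative p).natDegree < e + 1 := by
    have := Polynomial.natDegree_derivative_le p
    omega
  rw [Polynomial.eval_eq_sum_range' hdlt]
  have hsum : ∑ i ∈ Finset.range (e + 1), (Polynomial.derivative p).coeff i * (1 : ℤ) ^ i
      = ∑ i ∈ Finset.range (e + 1), ((i : ℤ) + 1) * (A (i + 2) - 2 * A (i + 1) + A i) := by
    refine Finset.sum_congr rfl fun i _ => ?_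
    rw [Polynomial.coeff_derivative, key i]
    push_cast
    ring
  rw [hsum, tele A hA0 (e + 1)]
  rw [hApos _ (by omega), hApos _ (by omega), he (e + 1) (by omega), he e le_rfl]
  push_cast
  ring
end

section
/- Let X = ∏_{i=1}^n X_i and for each i let {_iU_j}_{j=0}^S be a (k_i+1)-cover of X_i, where S = Σ_{i=1}^n k_i (i.e., any k_i+1 of the sets _iU_0,…,_iU_S cover X_i). Then the sets W_j = ∏_{i=1}^n {_iU_j}, for j = 0, 1, …, S, cover X. -/
/-- Let `X = ∏_{i=1}^n X_i`, and for each `i` let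
`U i 0, …, U i S` be a `(k_i + 1)`-cover of `X_i`, where `S = Σ_i k_i`.
Then the product sets `W_j = ∏_i U i j`, `j = 0, …, S`, cover `X`. -/
theorem stmt6 {n : ℕ} (X : Fin n → Type*) [∀ i, TopologicalSpace (X i)]
    (k : Fin n → ℕ) (S : ℕ) (hS : S = ∑ i, k i)
    (U : ∀ i : Fin n, Fin (S + 1) → Set (X i))
    (hopen : ∀ i j, IsOpen (U i j))
    (hcov : ∀ i : Fin n, ∀ s : Finset (Fin (S + 1)), s.card = k i + 1 →
      (⋃ j ∈ s, U i j) = Set.univ) :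
    ∀ x : (∀ i, X i), ∃ j : Fin (S + 1), ∀ i, x i ∈ U i j := by
  intro x
  classical
  set B : Fin n → Finset (Fin (S + 1)) :=
    fun i => Finset.univ.filter (fun j => x i ∉ U i j) with hB
  have hcard : ∀ i, (B i).card ≤ k i := by
    intro i
    by_contra h
    push_neg at h
    obtain ⟨s, hs_sub, hs_card⟩ := Finset.exists_subset_card_eq h
    have := hcov i s hs_card
    have hx : x i ∈ ⋃ j ∈ s, U i j := this ▸ Set.mem_univ _
    simp only [Set.mem_iUnion] at hx
    obtain ⟨j, hj, hxj⟩ := hx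
    have := hs_sub hj
    simp [hB] at this
    exact this hxj
  have hbig : (Finset.univ.biUnion B).card ≤ S := by
    calc (Finset.univ.biUnion B).card ≤ ∑ i, (B i).card :=
          Finset.card_biUnion_le
      _ ≤ ∑ i, k i := Finset.sum_le_sum fun i _ => hcard i
      _ = S := hS.symm
  have : (Finset.univ.biUnion B) ≠ Finset.univ := by
    intro h
    rw [h, Finset.card_univ, Fintype.card_fin] at hbig
    omega
  obtain ⟨j, hj⟩ : ∃ j, j ∉ Finset.univ.biUnion B := by
    by_contra h
    push_neg at h
    exact this (Finset.eq_univ_iff_forall.mpr h)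
  refine ⟨j, fun i => ?_⟩
  simp [hB, Finset.mem_biUnion] at hj
  exact hj i
end

section
/- For n ≥ 2, let 𝒪_n be the graph with vertex set V ∪ W where V = {v_1,…,v_n} spans a complete graph K_n and W = {w_1,…,w_n} are additional vertices, and each w_i is adjacent to all vertices of V except v_i (and to no w_j). Then for 2 ≤ r ≤ n−1, z_r(𝒪_n) = (r−1)n + r; moreover z_r(𝒪_n) = rn for all r ≥ n. -/
noncomputable def zr {V : Type*} [Fintype V] [DecidableEq V] (G : SimpleGraph V)
    (r : ℕ) : ℕ :=
  sSup {m | ∃ C : Fin r → Finset V, (∀ i, G.IsClique (C i : Set V)) ∧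
    Finset.univ.inf C = ∅ ∧ m = ∑ i, (C i).card}

/-- The graph `𝒪_n`: vertices `inl i = v_i` (spanning a complete graph `K_n`)
and `inr i = w_i`, with `w_i` adjacent exactly to the `v_j` with `j ≠ i`,
and no edges among the `w_i`. -/
def On (n : ℕ) : SimpleGraph (Fin n ⊕ Fin n) :=
  SimpleGraph.fromRel (fun a b =>
    match a, b with
    | Sum.inl _, Sum.inl _ => True
    | Sum.inl i, Sum.inr j => i ≠ j
    | Sum.inr i, Sum.inl j => i ≠ j
    | Sum.inr _, Sum.inr _ => False)

namespace OnAux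

variable {n : ℕ}

@[simp] lemma adj_ll {i j : Fin n} : (On n).Adj (.inl i) (.inl j) ↔ i ≠ j := by
  simp [On, SimpleGraph.fromRel_adj]

@[simp] lemma adj_lr {i j : Fin n} : (On n).Adj (.inl i) (.inr j) ↔ i ≠ j := by
  simp [On, SimpleGraph.fromRel_adj]
  exact fun h h' => h h'.symm

@[simp] lemma adj_rl {i j : Fin n} : (On n).Adj (.inr i) (.inl j) ↔ j ≠ i := by
  simp [On, SimpleGraph.fromRel_adj]
  exact fun h h' => h h'.symm

@[simp] lemma not_adj_rr {i j : Fin n} : ¬ (On n).Adj (.inr i) (.inr j) := by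
  simp [On, SimpleGraph.fromRel_adj]

/-- The clique `(V \ {v_j}) ∪ {w_j}`. -/
def Kc (j : Fin n) : Finset (Fin n ⊕ Fin n) :=
  insert (Sum.inr j) ((Finset.univ.filter (· ≠ j)).image Sum.inl)

@[simp] lemma mem_Kc_inl {a j : Fin n} : Sum.inl a ∈ Kc j ↔ a ≠ j := by
  simp [Kc]

@[simp] lemma mem_Kc_inr {a j : Fin n} : Sum.inr a ∈ Kc j ↔ a = j := by
  simp [Kc]

lemma card_Kc (j : Fin n) : (Kc j).card = n := by
  have h0 : 0 < n := j.pos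
  rw [Kc, Finset.card_insert_of_notMem (by simp),
    Finset.card_image_of_injective _ Sum.inl_injective,
    Finset.filter_ne', Finset.card_erase_of_mem (Finset.mem_univ _)]
  simp only [Finset.card_univ, Fintype.card_fin]
  omega

lemma clique_Kc (j : Fin n) : (On n).IsClique (Kc j : Set (Fin n ⊕ Fin n)) := by
  intro x hx y hy hxy
  rw [Finset.mem_coe] at hx hy
  rcases x with a | a <;> rcases y with b | b
  · rw [mem_Kc_inl] at hx hy
    exact adj_ll.mpr (fun h => hxy (by rw [h]))
  · rw [mem_Kc_inl] at hx
    rw [mem_Kc_inr] at hy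
    exact adj_lr.mpr (by rw [hy]; exact hx)
  · rw [mem_Kc_inr] at hx
    rw [mem_Kc_inl] at hy
    exact adj_rl.mpr (by rw [hx]; exact hy)
  · rw [mem_Kc_inr] at hx hy
    exact absurd (by rw [hx, hy]) hxy

/-- The clique `{v_0, …, v_{k-1}} ∪ {w_k}`. -/
def Dc (k : Fin n) : Finset (Fin n ⊕ Fin n) :=
  insert (Sum.inr k) ((Finset.univ.filter (fun a : Fin n => a.val < k.val)).image Sum.inl)

@[simp] lemma mem_Dc_inl {a k : Fin n} : Sum.inl a ∈ Dc k ↔ a.val < k.val := by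
  simp [Dc]

@[simp] lemma mem_Dc_inr {a k : Fin n} : Sum.inr a ∈ Dc k ↔ a = k := by
  simp [Dc]

lemma card_Dc (k : Fin n) : (Dc k).card = k.val + 1 := by
  have : Finset.univ.filter (fun a : Fin n => a.val < k.val) = Finset.Iio k := by
    ext a
    simp only [Finset.mem_filter, Finset.mem_univ, true_and, Finset.mem_Iio, Fin.lt_def]
  rw [Dc, Finset.card_insert_of_notMem (by simp),
    Finset.card_image_of_injective _ Sum.inl_injective, this, Fin.card_Iio]

lemma clique_Dc (k : Fin n) : (On n).IsClique (Dc k : Set (Fin n ⊕ Fin n)) := by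
  intro x hx y hy hxy
  rw [Finset.mem_coe] at hx hy
  rcases x with a | a <;> rcases y with b | b
  · rw [mem_Dc_inl] at hx hy
    exact adj_ll.mpr (fun h => hxy (by rw [h]))
  · rw [mem_Dc_inl] at hx
    rw [mem_Dc_inr] at hy
    refine adj_lr.mpr (fun h => ?_)
    rw [h, hy] at hx
    omega
  · rw [mem_Dc_inr] at hx
    rw [mem_Dc_inl] at hy
    refine adj_rl.mpr (fun h => ?_)
    rw [h, hx] at hy
    omega
  · rw [mem_Dc_inr] at hx hy
    exact absurd (by rw [hx, hy]) hxy

/-- The set of `j` with `v_j` in `C`. -/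
def L (C : Finset (Fin n ⊕ Fin n)) : Finset (Fin n) :=
  Finset.univ.filter (fun j => Sum.inl j ∈ C)

lemma filter_isLeft_eq (C : Finset (Fin n ⊕ Fin n)) :
    C.filter (fun x => x.isLeft) = (L C).image Sum.inl := by
  ext x
  rcases x with a | a <;> simp [L]

lemma card_le_L (C : Finset (Fin n ⊕ Fin n)) (h : (On n).IsClique (C : Set (Fin n ⊕ Fin n))) :
    C.card ≤ (L C).card + 1 := by
  have hsplit := Finset.card_filter_add_card_filter_not
    (s := C) (p := fun x : Fin n ⊕ Fin n => x.isLeft)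
  have h1 : (C.filter (fun x => x.isLeft)).card = (L C).card := by
    rw [filter_isLeft_eq, Finset.card_image_of_injective _ Sum.inl_injective]
  have h2 : (C.filter (fun x : Fin n ⊕ Fin n => ¬ x.isLeft)).card ≤ 1 := by
    rw [Finset.card_le_one]
    intro x hx y hy
    simp only [Finset.mem_filter] at hx hy
    rcases x with a | a
    · simp at hx
    rcases y with b | b
    · simp at hy
    by_contra hne
    exact not_adj_rr (h hx.1 hy.1 hne)
  omega

lemma clique_card_le (C : Finset (Fin n ⊕ Fin n))
    (h : (On n).IsClique (C : Set (Fin n ⊕ Fin n))) : C.card ≤ n := by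
  by_cases hw : ∃ a, Sum.inr a ∈ C
  · obtain ⟨a, ha⟩ := hw
    have hla : Sum.inl a ∉ C := by
      intro hla
      have := h hla ha (by simp)
      simp at this
    have hsub : L C ⊆ Finset.univ.erase a := by
      intro x hx
      simp only [L, Finset.mem_filter, Finset.mem_univ, true_and] at hx
      simp only [Finset.mem_erase, Finset.mem_univ, and_true]
      rintro rfl; exact hla hx
    have h1 := Finset.card_le_card hsub
    have h2 := card_le_L C h
    have h3 : (Finset.univ.erase a).card = n - 1 := by
      rw [Finset.card_erase_of_mem (Finset.mem_univ _)]; simp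
    have h0 : 0 < n := a.pos
    omega
  · push_neg at hw
    have hsub : C ⊆ Finset.univ.image Sum.inl := by
      intro x hx
      rcases x with a | a
      · simp
      · exact absurd hx (hw a)
    have := Finset.card_le_card hsub
    rwa [Finset.card_image_of_injective _ Sum.inl_injective, Finset.card_univ,
      Fintype.card_fin] at this

lemma sum_le (r : ℕ) (C : Fin r → Finset (Fin n ⊕ Fin n))
    (hcl : ∀ i, (On n).IsClique (C i : Set (Fin n ⊕ Fin n)))
    (hint : Finset.univ.inf C = ∅) :
    ∑ i, (C i).card ≤ (r - 1) * n + r := by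
  have hA : ∀ i, (C i).card ≤ (L (C i)).card + 1 := fun i => card_le_L _ (hcl i)
  have hcov : (Finset.univ : Finset (Fin n)) ⊆
      Finset.univ.biUnion (fun i => (L (C i))ᶜ) := by
    intro j _
    have hj : Sum.inl j ∉ Finset.univ.inf C := by rw [hint]; simp
    simp only [Finset.mem_inf, Finset.mem_univ, forall_true_left, not_forall] at hj
    obtain ⟨i, hi⟩ := hj
    refine Finset.mem_biUnion.mpr ⟨i, Finset.mem_univ _, ?_⟩
    rw [Finset.mem_compl]
    simp only [L, Finset.mem_filter, Finset.mem_univ, true_and]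
    exact hi
  have h1 : n ≤ ∑ i, ((L (C i))ᶜ).card := by
    calc n = (Finset.univ : Finset (Fin n)).card := by simp
    _ ≤ (Finset.univ.biUnion (fun i => (L (C i))ᶜ)).card := Finset.card_le_card hcov
    _ ≤ ∑ i, ((L (C i))ᶜ).card := Finset.card_biUnion_le
  have h4 : ∑ i, (L (C i)).card + ∑ i, ((L (C i))ᶜ).card = r * n := by
    rw [← Finset.sum_add_distrib]
    rw [Finset.sum_congr rfl (fun i _ => Finset.card_add_card_compl (L (C i)))]
    simp [mul_comm]
  have h5 : (r - 1) * n = r * n - n := by rw [Nat.sub_one_mul]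
  calc ∑ i, (C i).card ≤ ∑ i, ((L (C i)).card + 1) :=
      Finset.sum_le_sum (fun i _ => hA i)
    _ = ∑ i, (L (C i)).card + r := by rw [Finset.sum_add_distrib]; simp
    _ ≤ (r - 1) * n + r := by omega

end OnAux

open OnAux in
/-- For `n ≥ 2`, `z_r(𝒪_n) = (r−1)n + r` for `2 ≤ r ≤ n−1`,
and `z_r(𝒪_n) = rn` for all `r ≥ n`. -/
theorem stmt10 (n : ℕ) (hn : 2 ≤ n) :
    (∀ r : ℕ, 2 ≤ r → r ≤ n - 1 → zr (On n) r = (r - 1) * n + r) ∧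
    (∀ r : ℕ, n ≤ r → zr (On n) r = r * n) := by
  constructor
  · -- 2 ≤ r ≤ n - 1
    intro r hr2 hrn
    have hrn' : r < n := by omega
    set k : Fin n := ⟨r - 1, by omega⟩ with hk
    set C : Fin r → Finset (Fin n ⊕ Fin n) :=
      fun i => if h : i.val < r - 1 then Kc ⟨i.val, by omega⟩ else Dc k with hC
    have hcl : ∀ i, (On n).IsClique (C i : Set (Fin n ⊕ Fin n)) := by
      intro i
      rw [hC]
      dsimp only
      split_ifs
      · exact clique_Kc _
      · exact clique_Dc _
    have hinf : Finset.univ.inf C = ∅ := by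
      rw [Finset.eq_empty_iff_forall_notMem]
      intro x hx
      simp only [Finset.mem_inf, Finset.mem_univ, forall_true_left] at hx
      rcases x with j | j
      · by_cases hj : j.val < r - 1
        · have := hx ⟨j.val, by omega⟩
          rw [hC] at this
          simp only [hj, dif_pos] at this
          rw [mem_Kc_inl] at this
          exact this rfl
        · have := hx ⟨r - 1, by omega⟩
          rw [hC] at this
          simp only [lt_irrefl, dif_neg, not_false_iff] at this
          rw [mem_Dc_inl] at this
          simp only [hk] at this
          omega
      · have h1 := hx ⟨r - 1, by omega⟩
        rw [hC] at h1
        simp only [lt_irrefl, dif_neg, not_false_iff] at h1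
        rw [mem_Dc_inr] at h1
        have h2 := hx ⟨0, by omega⟩
        rw [hC] at h2
        have h0 : (0 : ℕ) < r - 1 := by omega
        simp only [h0, dif_pos] at h2
        rw [mem_Kc_inr] at h2
        have e1 : j.val = r - 1 := by rw [h1]
        have e2 : j.val = 0 := by rw [h2]
        omega
    have hsum : ∑ i, (C i).card = (r - 1) * n + r := by
      have hcard : ∀ i : Fin r, (C i).card = if i.val < r - 1 then n else r := by
        intro i
        rw [hC]
        dsimp only
        split_ifs
        · exact card_Kc _
        · rw [card_Dc]; simp only [hk]; omega
      rw [Finset.sum_congr rfl (fun i _ => hcard i)]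
      rw [Fin.sum_univ_eq_sum_range (fun i => if i < r - 1 then n else r) r]
      obtain ⟨s, rfl⟩ : ∃ s, r = s + 1 := ⟨r - 1, by omega⟩
      rw [Finset.sum_range_succ]
      simp only [Nat.add_sub_cancel]
      rw [Finset.sum_congr rfl (fun i hi => if_pos (Finset.mem_range.mp hi))]
      rw [Finset.sum_const, Finset.card_range, smul_eq_mul]
      simp
    have hmem : ((r - 1) * n + r) ∈ {m | ∃ C : Fin r → Finset (Fin n ⊕ Fin n),
        (∀ i, (On n).IsClique (C i : Set (Fin n ⊕ Fin n))) ∧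
        Finset.univ.inf C = ∅ ∧ m = ∑ i, (C i).card} :=
      ⟨C, hcl, hinf, hsum.symm⟩
    have hub : ∀ x ∈ {m | ∃ C : Fin r → Finset (Fin n ⊕ Fin n),
        (∀ i, (On n).IsClique (C i : Set (Fin n ⊕ Fin n))) ∧
        Finset.univ.inf C = ∅ ∧ m = ∑ i, (C i).card}, x ≤ (r - 1) * n + r := by
      rintro x ⟨D, hD1, hD2, rfl⟩
      exact sum_le r D hD1 hD2
    exact le_antisymm (csSup_le ⟨_, hmem⟩ hub) (le_csSup ⟨_, hub⟩ hmem)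
  · -- r ≥ n
    intro r hrn
    have hn0 : 0 < n := by omega
    set C : Fin r → Finset (Fin n ⊕ Fin n) :=
      fun i => Kc ⟨i.val % n, Nat.mod_lt _ hn0⟩ with hC
    have hcl : ∀ i, (On n).IsClique (C i : Set (Fin n ⊕ Fin n)) := fun i => clique_Kc _
    have hinf : Finset.univ.inf C = ∅ := by
      rw [Finset.eq_empty_iff_forall_notMem]
      intro x hx
      simp only [Finset.mem_inf, Finset.mem_univ, forall_true_left] at hx
      rcases x with j | j
      · have := hx ⟨j.val, by omega⟩
        rw [hC] at this
        rw [mem_Kc_inl] at this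
        apply this
        ext
        simp [Nat.mod_eq_of_lt j.isLt]
      · have h1 := hx ⟨0, by omega⟩
        have h2 := hx ⟨1, by omega⟩
        rw [hC, mem_Kc_inr] at h1 h2
        have e1 : j.val = 0 % n := by rw [h1]
        have e2 : j.val = 1 % n := by rw [h2]
        rw [Nat.mod_eq_of_lt (by omega)] at e1
        rw [Nat.mod_eq_of_lt (by omega)] at e2
        omega
    have hsum : ∑ i, (C i).card = r * n := by
      rw [Finset.sum_congr rfl (fun i _ => card_Kc _)]
      simp [mul_comm]
    have hmem : (r * n) ∈ {m | ∃ C : Fin r → Finset (Fin n ⊕ Fin n),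
        (∀ i, (On n).IsClique (C i : Set (Fin n ⊕ Fin n))) ∧
        Finset.univ.inf C = ∅ ∧ m = ∑ i, (C i).card} :=
      ⟨C, hcl, hinf, hsum.symm⟩
    have hub : ∀ x ∈ {m | ∃ C : Fin r → Finset (Fin n ⊕ Fin n),
        (∀ i, (On n).IsClique (C i : Set (Fin n ⊕ Fin n))) ∧
        Finset.univ.inf C = ∅ ∧ m = ∑ i, (C i).card}, x ≤ r * n := by
      rintro x ⟨D, hD1, hD2, rfl⟩
      calc ∑ i, (D i).card ≤ ∑ _i : Fin r, n :=
          Finset.sum_le_sum (fun i _ => clique_card_le _ (hD1 i))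
        _ = r * n := by simp [mul_comm]
    exact le_antisymm (csSup_le ⟨_, hmem⟩ hub) (le_csSup ⟨_, hub⟩ hmem)
end

section
/- Let Γ_1 and Γ_2 be simplicial graphs on disjoint vertex sets and let Γ_1 * Γ_2 be their join (every vertex of Γ_1 adjacent to every vertex of Γ_2). Then for every r ≥ 2, z_r(Γ_1 * Γ_2) = z_r(Γ_1) + z_r(Γ_2). -/
/-- The join `Γ₁ * Γ₂` of two graphs on disjoint vertex sets: keep the edges of
each graph and add all edges between the two vertex sets. -/
def graphJoin {α β : Type*} (G : SimpleGraph α) (H : SimpleGraph β) :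
    SimpleGraph (α ⊕ β) :=
  SimpleGraph.fromRel (fun a b =>
    match a, b with
    | Sum.inl x, Sum.inl y => G.Adj x y
    | Sum.inl _, Sum.inr _ => True
    | Sum.inr _, Sum.inl _ => True
    | Sum.inr x, Sum.inr y => H.Adj x y)

lemma join_adj_ll {α β : Type*} (G : SimpleGraph α) (H : SimpleGraph β) (x y : α) :
    (graphJoin G H).Adj (Sum.inl x) (Sum.inl y) ↔ G.Adj x y := by
  simp only [graphJoin, SimpleGraph.fromRel_adj, ne_eq, Sum.inl.injEq]
  constructor
  · rintro ⟨h, h' | h'⟩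
    · exact h'
    · exact h'.symm
  · intro h; exact ⟨h.ne, Or.inl h⟩

lemma join_adj_rr {α β : Type*} (G : SimpleGraph α) (H : SimpleGraph β) (x y : β) :
    (graphJoin G H).Adj (Sum.inr x) (Sum.inr y) ↔ H.Adj x y := by
  simp only [graphJoin, SimpleGraph.fromRel_adj, ne_eq, Sum.inr.injEq]
  constructor
  · rintro ⟨h, h' | h'⟩
    · exact h'
    · exact h'.symm
  · intro h; exact ⟨h.ne, Or.inl h⟩

lemma join_adj_lr {α β : Type*} (G : SimpleGraph α) (H : SimpleGraph β) (x : α) (y : β) :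
    (graphJoin G H).Adj (Sum.inl x) (Sum.inr y) := by
  simp [graphJoin, SimpleGraph.fromRel_adj]

lemma mem_inf_univ {ι V : Type*} [Fintype ι] [Nonempty ι] [DecidableEq V] [Fintype V]
    (C : ι → Finset V) (a : V) : a ∈ Finset.univ.inf C ↔ ∀ i, a ∈ C i := by
  rw [← Finset.inf'_eq_inf Finset.univ_nonempty, Finset.mem_inf']
  simp

lemma zrSet_bdd {V : Type*} [Fintype V] [DecidableEq V] (K : SimpleGraph V) (r : ℕ) :
    BddAbove {m | ∃ C : Fin r → Finset V, (∀ i, K.IsClique (C i : Set V)) ∧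
      Finset.univ.inf C = ∅ ∧ m = ∑ i, (C i).card} := by
  refine ⟨r * Fintype.card V, ?_⟩
  rintro m ⟨C, -, -, rfl⟩
  calc ∑ i, (C i).card ≤ ∑ _i : Fin r, Fintype.card V :=
        Finset.sum_le_sum fun i _ => Finset.card_le_card (Finset.subset_univ _)
    _ = r * Fintype.card V := by simp [Finset.sum_const, Finset.card_univ, mul_comm]

lemma zrSet_zero_mem {V : Type*} [Fintype V] [DecidableEq V] (K : SimpleGraph V) (r : ℕ)
    [NeZero r] :
    (0 : ℕ) ∈ {m | ∃ C : Fin r → Finset V, (∀ i, K.IsClique (C i : Set V)) ∧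
      Finset.univ.inf C = ∅ ∧ m = ∑ i, (C i).card} := by
  refine ⟨fun _ => ∅, fun i => by simp, ?_, by simp⟩
  rw [Finset.inf_const Finset.univ_nonempty]

/-- For the join of two graphs,
`z_r(Γ₁ * Γ₂) = z_r(Γ₁) + z_r(Γ₂)` for all `r ≥ 2`. -/
theorem stmt11 {α β : Type*} [Fintype α] [Fintype β] [DecidableEq α]
    [DecidableEq β] (G : SimpleGraph α) (H : SimpleGraph β) (r : ℕ) (hr : 2 ≤ r) :
    zr (graphJoin G H) r = zr G r + zr H r := by
  have hrpos : 0 < r := lt_of_lt_of_le two_pos hr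
  haveI : NeZero r := ⟨hrpos.ne'⟩
  -- decomposition and combination
  have key2 : ∀ a b, a ∈ {m | ∃ C : Fin r → Finset α, (∀ i, G.IsClique (C i : Set α)) ∧
        Finset.univ.inf C = ∅ ∧ m = ∑ i, (C i).card} →
      b ∈ {m | ∃ C : Fin r → Finset β, (∀ i, H.IsClique (C i : Set β)) ∧
        Finset.univ.inf C = ∅ ∧ m = ∑ i, (C i).card} →
      a + b ∈ {m | ∃ C : Fin r → Finset (α ⊕ β),
        (∀ i, (graphJoin G H).IsClique (C i : Set (α ⊕ β))) ∧
        Finset.univ.inf C = ∅ ∧ m = ∑ i, (C i).card} := by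
    rintro a b ⟨C, hC, hCinf, rfl⟩ ⟨D, hD, hDinf, rfl⟩
    refine ⟨fun i => (C i).disjSum (D i), ?_, ?_, ?_⟩
    · intro i x hx y hy hne
      rw [Finset.mem_coe] at hx hy
      rcases x with x | x <;> rcases y with y | y
      · rw [join_adj_ll]
        exact hC i (by simpa using hx) (by simpa using hy) (by simpa using hne)
      · exact join_adj_lr G H x y
      · exact ((graphJoin G H).adj_symm (join_adj_lr G H y x))
      · rw [join_adj_rr]
        exact hD i (by simpa using hx) (by simpa using hy) (by simpa using hne)
    · rw [Finset.eq_empty_iff_forall_notMem]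
      intro x hx
      rw [mem_inf_univ] at hx
      rcases x with x | x
      · have : x ∈ Finset.univ.inf C := by
          rw [mem_inf_univ]; intro i; simpa using hx i
        simp [hCinf] at this
      · have : x ∈ Finset.univ.inf D := by
          rw [mem_inf_univ]; intro i; simpa using hx i
        simp [hDinf] at this
    · simp [Finset.card_disjSum, Finset.sum_add_distrib]
  have key1 : ∀ m ∈ {m | ∃ C : Fin r → Finset (α ⊕ β),
        (∀ i, (graphJoin G H).IsClique (C i : Set (α ⊕ β))) ∧
        Finset.univ.inf C = ∅ ∧ m = ∑ i, (C i).card},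
      ∃ a b, a ∈ {m | ∃ C : Fin r → Finset α, (∀ i, G.IsClique (C i : Set α)) ∧
        Finset.univ.inf C = ∅ ∧ m = ∑ i, (C i).card} ∧
      b ∈ {m | ∃ C : Fin r → Finset β, (∀ i, H.IsClique (C i : Set β)) ∧
        Finset.univ.inf C = ∅ ∧ m = ∑ i, (C i).card} ∧ m = a + b := by
    rintro m ⟨E, hE, hEinf, rfl⟩
    refine ⟨∑ i, (E i).toLeft.card, ∑ i, (E i).toRight.card, ⟨fun i => (E i).toLeft, ?_, ?_, rfl⟩,
      ⟨fun i => (E i).toRight, ?_, ?_, rfl⟩, ?_⟩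
    · intro i x hx y hy hne
      rw [← join_adj_ll G H]
      exact hE i (by simpa using hx) (by simpa using hy) (by simpa using hne)
    · rw [Finset.eq_empty_iff_forall_notMem]
      intro x hx
      rw [mem_inf_univ] at hx
      have : Sum.inl x ∈ Finset.univ.inf E := by
        rw [mem_inf_univ]; intro i; simpa using hx i
      simp [hEinf] at this
    · intro i x hx y hy hne
      rw [← join_adj_rr G H]
      exact hE i (by simpa using hx) (by simpa using hy) (by simpa using hne)
    · rw [Finset.eq_empty_iff_forall_notMem]
      intro x hx
      rw [mem_inf_univ] at hx
      have : Sum.inr x ∈ Finset.univ.inf E := by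
        rw [mem_inf_univ]; intro i; simpa using hx i
      simp [hEinf] at this
    · rw [← Finset.sum_add_distrib]
      exact (Finset.sum_congr rfl fun i _ => (Finset.card_toLeft_add_card_toRight (u := E i)).symm)
  unfold zr
  apply le_antisymm
  · apply csSup_le ⟨0, zrSet_zero_mem (graphJoin G H) r⟩
    intro m hm
    obtain ⟨a, b, ha, hb, rfl⟩ := key1 m hm
    exact add_le_add (le_csSup (zrSet_bdd G r) ha) (le_csSup (zrSet_bdd H r) hb)
  · have haG := Nat.sSup_mem ⟨0, zrSet_zero_mem G r⟩ (zrSet_bdd G r)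
    have hbH := Nat.sSup_mem ⟨0, zrSet_zero_mem H r⟩ (zrSet_bdd H r)
    exact le_csSup (zrSet_bdd (graphJoin G H) r) (key2 _ _ haG hbH)
end

section
/- Let Γ be a graph, v a vertex of Γ, and D_v(Γ) the double of Γ along St(v). Suppose no vertex of St(v) belongs to a clique of maximal cardinality of Γ. Then for all r ≥ 2, z_r(D_v(Γ)) = r·c(Γ), and moreover c(D_v(Γ)) = c(Γ). -/
noncomputable def maxClique {V : Type*} [Fintype V] [DecidableEq V]
    (G : SimpleGraph V) : ℕ :=
  sSup {m | ∃ C : Finset V, G.IsClique (C : Set V) ∧ C.card = m}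

/-- The star of `v`: `v` together with its neighbours. -/
def graphStar {V : Type*} (G : SimpleGraph V) (v : V) : Set V :=
  {u | u = v ∨ G.Adj v u}

/-- Vertex set of the double `D_v(Γ)`: a full copy of `V` together with a second
copy of the vertices outside the star of `v`. -/
def DoubleVert {V : Type*} (G : SimpleGraph V) (v : V) : Type _ :=
  V ⊕ {u : V // u ∉ graphStar G v}

/-- The double `D_v(Γ)` of `Γ` along the star of `v`: two copies of `Γ` glued
along `St(v)`. -/
def graphDouble {V : Type*} (G : SimpleGraph V) (v : V) :
    SimpleGraph (DoubleVert G v) :=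
  SimpleGraph.fromRel (fun a b =>
    match a, b with
    | Sum.inl x, Sum.inl y => G.Adj x y
    | Sum.inl x, Sum.inr y => x ∈ graphStar G v ∧ G.Adj x y.1
    | Sum.inr x, Sum.inl y => y ∈ graphStar G v ∧ G.Adj y x.1
    | Sum.inr x, Sum.inr y => G.Adj x.1 y.1)

noncomputable instance {V : Type*} [Fintype V] (G : SimpleGraph V) (v : V) :
    Fintype (DoubleVert G v) := by
  classical exact inferInstanceAs (Fintype (V ⊕ {u : V // u ∉ graphStar G v}))

instance {V : Type*} [DecidableEq V] (G : SimpleGraph V) (v : V) :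
    DecidableEq (DoubleVert G v) := by
  classical exact inferInstanceAs (DecidableEq (V ⊕ {u : V // u ∉ graphStar G v}))

section Aux
variable {V : Type*} [Fintype V] [DecidableEq V] (G : SimpleGraph V) (v : V)

lemma mc_bdd : BddAbove {m | ∃ C : Finset V, G.IsClique (C : Set V) ∧ C.card = m} := by
  refine ⟨Fintype.card V, ?_⟩
  rintro m ⟨C, -, rfl⟩
  exact C.card_le_univ.trans_eq Finset.card_univ

lemma card_le_maxClique (K : Finset V) (h : G.IsClique (K : Set V)) :
    K.card ≤ maxClique G :=
  le_csSup (mc_bdd G) ⟨K, h, rfl⟩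

lemma maxClique_exists :
    ∃ K : Finset V, G.IsClique (K : Set V) ∧ K.card = maxClique G := by
  have h0 : (0 : ℕ) ∈ {m | ∃ C : Finset V, G.IsClique (C : Set V) ∧ C.card = m} :=
    ⟨∅, by simp, by simp⟩
  obtain ⟨C, hC, hcard⟩ := Nat.sSup_mem ⟨0, h0⟩ (mc_bdd G)
  exact ⟨C, hC, hcard⟩

lemma double_adj_proj {a b : DoubleVert G v}
    (h : (graphDouble G v).Adj a b) :
    G.Adj (Sum.elim id Subtype.val a) (Sum.elim id Subtype.val b) := by
  rw [graphDouble, SimpleGraph.fromRel_adj] at h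
  obtain ⟨hne, h | h⟩ := h <;> cases a <;> cases b <;>
    simp only [Sum.elim_inl, Sum.elim_inr, id] <;>
    first
      | exact h
      | exact h.2
      | exact h.symm
      | exact h.2.symm

lemma adj_inl_inl {x y : V} (h : G.Adj x y) :
    (graphDouble G v).Adj (Sum.inl x) (Sum.inl y) := by
  rw [graphDouble]
  exact (SimpleGraph.fromRel_adj _ _ _).2 ⟨fun he => h.ne (Sum.inl.inj he), Or.inl h⟩

lemma adj_inr_inr {x y : {u : V // u ∉ graphStar G v}} (h : G.Adj x.1 y.1) :
    (graphDouble G v).Adj (Sum.inr x) (Sum.inr y) := by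
  rw [graphDouble]
  exact (SimpleGraph.fromRel_adj _ _ _).2
    ⟨fun he => h.ne (congrArg Subtype.val (Sum.inr.inj he)), Or.inl h⟩

lemma double_clique_card_le (D : Finset (DoubleVert G v))
    (hD : (graphDouble G v).IsClique (D : Set (DoubleVert G v))) :
    D.card ≤ maxClique G := by
  classical
  have hinj : Set.InjOn (Sum.elim id Subtype.val : DoubleVert G v → V)
      (D : Set (DoubleVert G v)) := by
    intro a ha b hb hab
    by_contra hne
    have := double_adj_proj G v (hD ha hb hne)
    rw [hab] at this
    exact G.irrefl this
  have himg : G.IsClique ((D.image (Sum.elim id Subtype.val) : Finset V) : Set V) := by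
    intro u hu w hw huw
    obtain ⟨a, ha, rfl⟩ := Finset.mem_image.mp (Finset.mem_coe.mp hu)
    obtain ⟨b, hb, rfl⟩ := Finset.mem_image.mp (Finset.mem_coe.mp hw)
    exact double_adj_proj G v (hD ha hb (fun h => huw (by rw [h])))
  have hcard : (D.image (Sum.elim id Subtype.val)).card = D.card :=
    Finset.card_image_of_injOn hinj
  exact hcard ▸ card_le_maxClique G _ himg

end Aux

/-- If no vertex of `St(v)` belongs to a clique of maximal
cardinality of `Γ`, then `z_r(D_v(Γ)) = r·c(Γ)` for all `r ≥ 2`, and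
`c(D_v(Γ)) = c(Γ)`. -/
theorem stmt13 {V : Type*} [Fintype V] [DecidableEq V] (G : SimpleGraph V)
    (v : V)
    (hstar : ∀ u ∈ graphStar G v, ∀ C : Finset V,
      G.IsClique (C : Set V) → C.card = maxClique G → u ∉ C) :
    (∀ r : ℕ, 2 ≤ r → zr (graphDouble G v) r = r * maxClique G) ∧
      maxClique (graphDouble G v) = maxClique G := by
  classical
  obtain ⟨K, hK, hKc⟩ := maxClique_exists G
  have hKstar : ∀ x ∈ K, x ∉ graphStar G v := fun x hx hs => hstar x hs K hK hKc hx
  -- the two copies of K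
  set A : Finset (DoubleVert G v) := K.image Sum.inl with hA
  set B : Finset (DoubleVert G v) :=
    K.attach.image (fun x => Sum.inr ⟨x.1, hKstar x.1 x.2⟩) with hB
  have hAcard : A.card = maxClique G := by
    rw [hA]
    exact (Finset.card_image_of_injective _ Sum.inl_injective).trans hKc
  have hBcard : B.card = maxClique G := by
    rw [hB]
    refine (Finset.card_image_of_injective _ ?_).trans (by rw [Finset.card_attach, hKc])
    intro a b h
    have h2 : a.1 = b.1 := congrArg (Sum.elim id Subtype.val : DoubleVert G v → V) h
    exact Subtype.ext h2
  have hAclique : (graphDouble G v).IsClique (A : Set (DoubleVert G v)) := by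
    intro a ha b hb hab
    obtain ⟨x, hx, rfl⟩ := Finset.mem_image.mp (Finset.mem_coe.mp ha)
    obtain ⟨y, hy, rfl⟩ := Finset.mem_image.mp (Finset.mem_coe.mp hb)
    exact adj_inl_inl G v (hK hx hy (fun h => hab (by rw [h])))
  have hBclique : (graphDouble G v).IsClique (B : Set (DoubleVert G v)) := by
    intro a ha b hb hab
    obtain ⟨x, -, rfl⟩ := Finset.mem_image.mp (Finset.mem_coe.mp ha)
    obtain ⟨y, -, rfl⟩ := Finset.mem_image.mp (Finset.mem_coe.mp hb)
    refine adj_inr_inr G v (hK x.2 y.2 ?_)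
    exact fun h => hab (congrArg Sum.inr (Subtype.ext h))
  have hdisj : A ∩ B = ∅ := by
    rw [Finset.eq_empty_iff_forall_notMem]
    intro a ha
    rw [Finset.mem_inter] at ha
    obtain ⟨haA, haB⟩ := ha
    obtain ⟨x, -, rfl⟩ := Finset.mem_image.mp haA
    obtain ⟨y, -, hy⟩ := Finset.mem_image.mp haB
    cases hy
  constructor
  · intro r hr
    have h0 : (⟨0, by omega⟩ : Fin r) ∈ (Finset.univ : Finset (Fin r)) := Finset.mem_univ _
    have hne : ((0 : ℕ)) ∈ {m | ∃ C : Fin r → Finset (DoubleVert G v),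
        (∀ i, (graphDouble G v).IsClique (C i : Set (DoubleVert G v))) ∧
        Finset.univ.inf C = ∅ ∧ m = ∑ i, (C i).card} := by
      refine ⟨fun _ => ∅, fun i => by simp, ?_, by simp⟩
      have : Finset.univ.inf (fun _ : Fin r => (∅ : Finset (DoubleVert G v))) ≤ ∅ :=
        Finset.inf_le h0
      exact le_antisymm this (by simp)
    apply le_antisymm
    · refine csSup_le ⟨0, hne⟩ ?_
      rintro m ⟨C, hCl, -, rfl⟩
      calc ∑ i, (C i).card ≤ ∑ _i : Fin r, maxClique G :=
            Finset.sum_le_sum fun i _ => double_clique_card_le G v _ (hCl i)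
        _ = r * maxClique G := by simp [Finset.sum_const, mul_comm]
    · have hbdd : BddAbove {m | ∃ C : Fin r → Finset (DoubleVert G v),
          (∀ i, (graphDouble G v).IsClique (C i : Set (DoubleVert G v))) ∧
          Finset.univ.inf C = ∅ ∧ m = ∑ i, (C i).card} := by
        refine ⟨r * Fintype.card (DoubleVert G v), ?_⟩
        rintro m ⟨C, -, -, rfl⟩
        calc ∑ i, (C i).card ≤ ∑ _i : Fin r, Fintype.card (DoubleVert G v) :=
              Finset.sum_le_sum fun i _ => (C i).card_le_univ.trans_eq Finset.card_univ
          _ = r * Fintype.card (DoubleVert G v) := by simp [Finset.sum_const, mul_comm]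
      refine le_csSup hbdd ?_
      refine ⟨fun i => if i = ⟨0, by omega⟩ then A else B, fun i => ?_, ?_, ?_⟩
      · by_cases h : i = ⟨0, by omega⟩ <;> simp [h, hAclique, hBclique]
      · have h1 : (⟨1, by omega⟩ : Fin r) ∈ (Finset.univ : Finset (Fin r)) :=
          Finset.mem_univ _
        have hle0 := Finset.inf_le (f := fun i : Fin r =>
          if i = ⟨0, by omega⟩ then A else B) h0
        have hle1 := Finset.inf_le (f := fun i : Fin r =>
          if i = ⟨0, by omega⟩ then A else B) h1
        have hle0' : (Finset.univ.inf fun i : Fin r =>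
            if i = ⟨0, by omega⟩ then A else B) ≤ A := by simpa using hle0
        have hle1' : (Finset.univ.inf fun i : Fin r =>
            if i = ⟨0, by omega⟩ then A else B) ≤ B := by
          simpa [Fin.ext_iff] using hle1
        refine le_antisymm ?_ (by simp)
        rw [← hdisj]
        exact le_inf hle0' hle1'
      · have : ∀ i : Fin r,
            ((if i = ⟨0, by omega⟩ then A else B)).card = maxClique G := by
          intro i
          by_cases h : i = ⟨0, by omega⟩ <;> simp [h, hAcard, hBcard]
        rw [Finset.sum_congr rfl fun i _ => this i]
        simp [Finset.sum_const, mul_comm]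
  · apply le_antisymm
    · refine csSup_le ⟨0, ∅, by simp, by simp⟩ ?_
      rintro m ⟨C, hC, rfl⟩
      exact double_clique_card_le G v C hC
    · exact hAcard ▸ card_le_maxClique _ A hAclique
end

section
/- Let Γ be a graph, v a vertex, and D_v(Γ) the double along St(v). Suppose there are cliques C_1, C_2 of Γ with |C_1| ≥ |C_2| and (r−1)|C_1| + |C_2| > z_r(Γ), such that no vertex of St(v) lies in C_1 ∩ C_2. Then z_r(D_v(Γ)) > z_r(Γ). -/
/-- If `Γ` has cliques `C₁, C₂` with `|C₁| ≥ |C₂|` and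
`(r−1)|C₁| + |C₂| > z_r(Γ)`, such that no vertex of `St(v)` lies in `C₁ ∩ C₂`,
then `z_r(D_v(Γ)) > z_r(Γ)`. -/
theorem stmt14 {V : Type*} [Fintype V] [DecidableEq V] (G : SimpleGraph V)
    (v : V) (r : ℕ) (hr : 2 ≤ r) (C₁ C₂ : Finset V)
    (h₁ : G.IsClique (C₁ : Set V)) (h₂ : G.IsClique (C₂ : Set V))
    (hcard : C₂.card ≤ C₁.card)
    (hbig : zr G r < (r - 1) * C₁.card + C₂.card)
    (hstar : ∀ u ∈ graphStar G v, u ∉ C₁ ∩ C₂) :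
    zr G r < zr (graphDouble G v) r := by
  classical
  obtain ⟨n, rfl⟩ : ∃ n, r = n + 1 := ⟨r - 1, by omega⟩
  have hn : 1 ≤ n := by omega
  simp only [Nat.add_sub_cancel] at hbig
  -- embedding of the second copy
  set f : V → DoubleVert G v :=
    fun u => if h : u ∈ graphStar G v then Sum.inl u else Sum.inr ⟨u, h⟩ with hf
  have hfinj : Function.Injective f := by
    intro a b hab
    have key : ∀ u, f u = if h : u ∈ graphStar G v then Sum.inl u else Sum.inr ⟨u, h⟩ :=
      fun u => rfl
    rw [key, key] at hab
    split_ifs at hab <;>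
      first
        | exact Sum.inl.inj hab
        | exact congrArg Subtype.val (Sum.inr.inj hab)
        | cases hab
  -- the r cliques in the double
  set D : Fin (n + 1) → Finset (DoubleVert G v) :=
    fun i => if i = Fin.last n then C₂.image f else C₁.image Sum.inl with hD
  have hadj : ∀ a b : DoubleVert G v, a ≠ b →
      (match a, b with
        | Sum.inl x, Sum.inl y => G.Adj x y
        | Sum.inl x, Sum.inr y => x ∈ graphStar G v ∧ G.Adj x y.1
        | Sum.inr x, Sum.inl y => y ∈ graphStar G v ∧ G.Adj y x.1
        | Sum.inr x, Sum.inr y => G.Adj x.1 y.1) →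
      (graphDouble G v).Adj a b := by
    intro a b hne hrel
    exact (SimpleGraph.fromRel_adj _ a b).2 ⟨hne, Or.inl hrel⟩
  have hclique : ∀ i, (graphDouble G v).IsClique ((D i : Finset (DoubleVert G v)) : Set (DoubleVert G v)) := by
    intro i
    by_cases hi : i = Fin.last n
    · simp only [hD, hi, if_pos rfl]
      intro x hx y hy hxy
      simp only [Finset.coe_image, Set.mem_image, Finset.mem_coe] at hx hy
      obtain ⟨a, ha, rfl⟩ := hx
      obtain ⟨b, hb, rfl⟩ := hy
      have hab : a ≠ b := fun h => hxy (by rw [h])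
      have hGab : G.Adj a b := h₂ ha hb hab
      apply hadj _ _ hxy
      by_cases hA : a ∈ graphStar G v <;> by_cases hB : b ∈ graphStar G v <;>
        simp [hf, hA, hB, hGab, hGab.symm]
    · simp only [hD, if_neg hi]
      intro x hx y hy hxy
      simp only [Finset.coe_image, Set.mem_image, Finset.mem_coe] at hx hy
      obtain ⟨a, ha, rfl⟩ := Finset.mem_image.mp hx
      obtain ⟨b, hb, rfl⟩ := Finset.mem_image.mp hy
      have hab : a ≠ b := fun h => hxy (by rw [h])
      exact hadj _ _ hxy (h₁ ha hb hab)
  have hinf : Finset.univ.inf D = ∅ := by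
    rw [Finset.eq_empty_iff_forall_notMem]
    intro x hx
    have h0 : x ∈ D 0 :=
      Finset.mem_of_subset (Finset.le_iff_subset.mp (Finset.inf_le (Finset.mem_univ _))) hx
    have hl : x ∈ D (Fin.last n) :=
      Finset.mem_of_subset (Finset.le_iff_subset.mp (Finset.inf_le (Finset.mem_univ _))) hx
    have h0ne : (0 : Fin (n+1)) ≠ Fin.last n := by
      intro h
      have := congrArg Fin.val h
      simp [Fin.last] at this
      omega
    have h0' : D 0 = C₁.image Sum.inl := by rw [hD]; simp [h0ne]; rfl
    have hl' : D (Fin.last n) = C₂.image f := by rw [hD]; simp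
    rw [h0'] at h0
    rw [hl'] at hl
    simp only [Finset.mem_image] at h0 hl
    obtain ⟨a, ha, rfl⟩ := Finset.mem_image.mp h0
    obtain ⟨b, hb, hba⟩ := hl
    by_cases hB : b ∈ graphStar G v
    · rw [hf] at hba
      simp only [hB, dite_true] at hba
      obtain rfl : b = a := Sum.inl_injective ((dif_pos hB).symm.trans hba)
      exact hstar b hB (Finset.mem_inter.2 ⟨ha, hb⟩)
    · simp [hf, hB] at hba
  have hsum : ∑ i, (D i).card = n * C₁.card + C₂.card := by
    rw [Fin.sum_univ_castSucc]
    have h1 : ∀ i : Fin n, (D i.castSucc).card = C₁.card := by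
      intro i
      have : (i.castSucc : Fin (n+1)) ≠ Fin.last n := Fin.castSucc_lt_last i |>.ne
      rw [hD]
      simp only [if_neg this]
      exact Finset.card_image_of_injective _ Sum.inl_injective
    have h2 : (D (Fin.last n)).card = C₂.card := by
      rw [hD]; simp only [if_pos rfl]
      exact Finset.card_image_of_injective _ hfinj
    rw [h2, Finset.sum_congr rfl (fun i _ => h1 i), Finset.sum_const, Finset.card_univ,
      Fintype.card_fin, smul_eq_mul]
  have hmem : n * C₁.card + C₂.card ∈
      {m | ∃ C : Fin (n+1) → Finset (DoubleVert G v),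
        (∀ i, (graphDouble G v).IsClique (C i : Set (DoubleVert G v))) ∧
        Finset.univ.inf C = ∅ ∧ m = ∑ i, (C i).card} :=
    ⟨D, hclique, hinf, hsum.symm⟩
  have hbdd : BddAbove {m | ∃ C : Fin (n+1) → Finset (DoubleVert G v),
        (∀ i, (graphDouble G v).IsClique (C i : Set (DoubleVert G v))) ∧
        Finset.univ.inf C = ∅ ∧ m = ∑ i, (C i).card} := by
    refine ⟨(n + 1) * Fintype.card (DoubleVert G v), ?_⟩
    rintro m ⟨C, -, -, rfl⟩
    calc ∑ i, (C i).card ≤ ∑ _i : Fin (n+1), Fintype.card (DoubleVert G v) :=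
          Finset.sum_le_sum fun i _ => Finset.card_le_univ _
      _ = (n + 1) * Fintype.card (DoubleVert G v) := by
          simp [Finset.sum_const, mul_comm]
  have hle : n * C₁.card + C₂.card ≤ zr (graphDouble G v) (n + 1) :=
    le_csSup hbdd hmem
  omega
end

section
/- Let n ≥ 1 with n ∉ {1,3,7}, and let θ be such that 2^{θ−1} ≤ n < 2^θ. Then the mod-2 zero-divisors cup-length of P^n equals 2^θ − 1; that is, the maximal number of elements z_j in the kernel of the cup-product map H*(P^n; ℤ/2) ⊗ H*(P^n; ℤ/2) → H*(P^n; ℤ/2) whose product is nonzero equals 2^θ − 1. -/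
open TensorProduct

/-- The mod-2 cohomology ring of `ℝP^n`: the truncated polynomial ring
`(ℤ/2)[u]/(u^{n+1})`. -/
abbrev cohRP (n : ℕ) : Type :=
  Polynomial (ZMod 2) ⧸ Ideal.span {(Polynomial.X : Polynomial (ZMod 2)) ^ (n + 1)}

noncomputable section
namespace S17
open Polynomial
variable (n : ℕ)

abbrev H (n : ℕ) : Type := AdjoinRoot ((X : (ZMod 2)[X]) ^ (n + 1))

def u : H n := AdjoinRoot.root _

def pb : PowerBasis (ZMod 2) (H n) := AdjoinRoot.powerBasis' (monic_X_pow _)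

lemma pb_dim : (pb n).dim = n + 1 := by simp [pb]

abbrev T (n : ℕ) : Type := H n ⊗[ZMod 2] H n

def bT : Module.Basis (Fin (pb n).dim × Fin (pb n).dim) (ZMod 2) (T n) :=
  Module.Basis.tensorProduct (pb n).basis (pb n).basis

instance : Nontrivial (H n) :=
  AdjoinRoot.nontrivial _ (by rw [degree_X_pow]; exact_mod_cast n.succ_ne_zero)

instance : CharP (H n) 2 :=
  charP_of_injective_algebraMap (algebraMap (ZMod 2) (H n)).injective 2

instance : Nontrivial (T n) := by
  refine nontrivial_of_ne (bT n ⟨⟨0, ?_⟩, ⟨0, ?_⟩⟩) 0 ((bT n).ne_zero _) <;>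
    rw [pb_dim] <;> omega

instance : CharP (T n) 2 :=
  charP_of_injective_algebraMap (algebraMap (ZMod 2) (T n)).injective 2

def z : T n := u n ⊗ₜ 1 + 1 ⊗ₜ u n

lemma u_pow_eq_zero : u n ^ (n + 1) = 0 := by
  have := AdjoinRoot.eval₂_root ((X : (ZMod 2)[X]) ^ (n + 1))
  simpa [u] using this

lemma u_pow_eq_zero' {i : ℕ} (hi : n + 1 ≤ i) : u n ^ i = 0 := by
  have : i = (n + 1) + (i - (n + 1)) := by omega
  rw [this, pow_add, u_pow_eq_zero, zero_mul]

lemma basis_eq {i : ℕ} (hi : i < (pb n).dim) : (pb n).basis ⟨i, hi⟩ = u n ^ i :=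
  (pb n).basis_eq_pow _

lemma repr_u_pow {i : ℕ} (hi : i < (pb n).dim) :
    (pb n).basis.repr (u n ^ i) = Finsupp.single ⟨i, hi⟩ 1 := by
  rw [← basis_eq n hi, Module.Basis.repr_self]

lemma mul'_z : LinearMap.mul' (ZMod 2) (H n) (z n) = 0 := by
  rw [z, map_add, LinearMap.mul'_apply, LinearMap.mul'_apply, mul_one, one_mul]
  exact CharTwo.add_self_eq_zero _

lemma z_pow_two_pow (θ : ℕ) (hθ : n < 2 ^ θ) : z n ^ (2 ^ θ) = 0 := by
  have hfr := add_pow_char_pow (R := T n) (x := u n ⊗ₜ (1 : H n)) (y := 1 ⊗ₜ u n)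
    (p := 2) (n := θ)
  rw [z, hfr, Algebra.TensorProduct.tmul_pow, Algebra.TensorProduct.tmul_pow, one_pow,
    u_pow_eq_zero' n (by omega)]
  simp

/-- every element of the kernel of multiplication is a multiple of `z`. -/
lemma ker_mul_sub (w : T n) (hw : LinearMap.mul' (ZMod 2) (H n) w = 0) :
    ∃ t : T n, t * z n = w := by
  rw [← Ideal.mem_span_singleton']
  set I : Ideal (T n) := Ideal.span {z n} with hI
  set q : T n →ₐ[ZMod 2] T n ⧸ I := Ideal.Quotient.mkₐ (ZMod 2) I with hq
  have hcomm : ∀ a : H n, q (a ⊗ₜ 1) = q (1 ⊗ₜ a) := by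
    have : q.comp (Algebra.TensorProduct.includeLeft) =
        q.comp (Algebra.TensorProduct.includeRight) := by
      apply AdjoinRoot.algHom_ext
      simp only [AlgHom.comp_apply, Algebra.TensorProduct.includeLeft_apply,
        Algebra.TensorProduct.includeRight_apply]
      rw [Ideal.Quotient.mkₐ_eq_mk, Ideal.Quotient.eq, CharTwo.sub_eq_add]
      exact Ideal.subset_span rfl
    intro a
    exact AlgHom.congr_fun this a
  have key : q.toLinearMap =
      (q.toLinearMap.comp ((TensorProduct.mk (ZMod 2) (H n) (H n)) 1)).comp
        (LinearMap.mul' (ZMod 2) (H n)) := by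
    apply TensorProduct.ext'
    intro a b
    simp only [LinearMap.comp_apply, AlgHom.toLinearMap_apply, LinearMap.mul'_apply,
      TensorProduct.mk_apply]
    have : (a ⊗ₜ (b : H n) : T n) = (a ⊗ₜ 1) * (1 ⊗ₜ b) := by
      rw [Algebra.TensorProduct.tmul_mul_tmul, mul_one, one_mul]
    rw [this, map_mul, hcomm a, ← map_mul, Algebra.TensorProduct.tmul_mul_tmul, one_mul]
  have : q w = 0 := by
    have := congrArg (fun f => f w) key
    simp only [LinearMap.comp_apply, AlgHom.toLinearMap_apply] at this
    rw [this, hw]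
    simp
  rwa [hq, Ideal.Quotient.mkₐ_eq_mk, Ideal.Quotient.eq_zero_iff_mem] at this

lemma lucas_odd {θ j : ℕ} (hj : j < 2 ^ θ) : (2 ^ θ - 1).choose j % 2 = 1 := by
  have h2 : Fact (Nat.Prime 2) := ⟨Nat.prime_two⟩
  have h := Choose.choose_modEq_prod_range_choose_nat (p := 2)
    (n := 2 ^ θ - 1) (k := j) (a := θ) (by omega) hj
  have hprod : (∏ i ∈ Finset.range θ, ((2 ^ θ - 1) / 2 ^ i % 2).choose (j / 2 ^ i % 2)) = 1 := by
    apply Finset.prod_eq_one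
    intro i hi
    rw [Finset.mem_range] at hi
    have hle : 2 ^ i ≤ 2 ^ θ := Nat.pow_le_pow_right (by norm_num) hi.le
    have h2i : 1 ≤ 2 ^ i := Nat.one_le_two_pow
    have hdiv : (2 ^ θ - 1) / 2 ^ i % 2 = 1 := by
      have key : 2 ^ i * (2 ^ (θ - i) - 1) = 2 ^ θ - 2 ^ i := by
        rw [Nat.mul_sub, mul_one, ← pow_add]
        congr 2
        omega
      have h1 : 2 ^ θ - 1 = 2 ^ i * (2 ^ (θ - i) - 1) + (2 ^ i - 1) := by omega
      rw [h1, Nat.mul_add_div (by omega), Nat.div_eq_of_lt (by omega), Nat.add_zero]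
      have hsp : 2 ^ (θ - i) = 2 * 2 ^ (θ - i - 1) := by
        rw [← _root_.pow_succ']
        congr 1
        omega
      have : 1 ≤ 2 ^ (θ - i - 1) := Nat.one_le_two_pow
      omega
    rw [hdiv]
    have h01 : j / 2 ^ i % 2 = 0 ∨ j / 2 ^ i % 2 = 1 := by omega
    rcases h01 with h | h <;> rw [h] <;> simp
  rw [hprod] at h
  simpa [Nat.ModEq] using h

lemma z_pow_ne_zero (θ : ℕ) (hθ0 : 1 ≤ θ) (hθ₁ : 2 ^ (θ - 1) ≤ n) (hθ₂ : n < 2 ^ θ) :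
    z n ^ (2 ^ θ - 1) ≠ 0 := by
  set k := 2 ^ θ - 1 with hk
  have hkn : k - n ≤ n := by
    have : 2 ^ θ = 2 * 2 ^ (θ - 1) := by
      rw [← _root_.pow_succ']; congr 1; omega
    omega
  have hnk : n ≤ k := by omega
  have hd : (pb n).dim = n + 1 := pb_dim n
  have h₁ : k - n < (pb n).dim := by omega
  have h₂ : n < (pb n).dim := by omega
  set ι : Fin (pb n).dim × Fin (pb n).dim := (⟨k - n, h₁⟩, ⟨n, h₂⟩) with hι
  set φ : T n →ₗ[ZMod 2] ZMod 2 :=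
    (Finsupp.lapply ι) ∘ₗ ((bT n).repr : T n →ₗ[ZMod 2] _) with hφ
  have hφtmul : ∀ (a b : H n), φ (a ⊗ₜ b) =
      (pb n).basis.repr b ι.2 • (pb n).basis.repr a ι.1 := by
    intro a b
    simp [hφ, hι, bT, Module.Basis.tensorProduct_repr_tmul_apply]
  suffices hval : φ (z n ^ k) = 1 by
    intro h0
    rw [h0, map_zero] at hval
    exact one_ne_zero hval.symm
  rw [z, add_pow, map_sum]
  have hterm : ∀ i : ℕ, (u n ⊗ₜ (1 : H n)) ^ i * ((1 : H n) ⊗ₜ u n) ^ (k - i)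
      * ((k.choose i : ℕ) : T n)
      = (k.choose i) • ((u n ^ i) ⊗ₜ (u n ^ (k - i))) := by
    intro i
    rw [Algebra.TensorProduct.tmul_pow, Algebra.TensorProduct.tmul_pow, one_pow, one_pow,
      Algebra.TensorProduct.tmul_mul_tmul, mul_one, one_mul, mul_comm, ← nsmul_eq_mul]
  rw [Finset.sum_congr rfl (fun i _ => congrArg φ (hterm i))]
  rw [Finset.sum_eq_single_of_mem (k - n) (Finset.mem_range.mpr (by omega))]
  · rw [map_nsmul, hφtmul]
    have hkk : k - (k - n) = n := by omega
    rw [hkk, repr_u_pow n h₁, repr_u_pow n h₂]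
    simp only [hι, Finsupp.single_eq_same, smul_eq_mul, mul_one]
    have := lucas_odd (θ := θ) (j := k - n) (by omega)
    rw [← hk] at this
    have : ((k.choose (k - n) : ℕ) : ZMod 2) = 1 := by
      rw [← ZMod.natCast_mod, this]; rfl
    rw [nsmul_eq_mul, this, one_mul]
  · intro i hi hne
    rw [map_nsmul, hφtmul]
    rcases le_or_gt i n with h | h
    · have : i < (pb n).dim := by omega
      rw [repr_u_pow n this]
      have : (⟨i, this⟩ : Fin (pb n).dim) ≠ ι.1 := by
        simp only [hι, ne_eq, Fin.mk.injEq]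
        omega
      rw [Finsupp.single_eq_of_ne this.symm]
      simp
    · rw [u_pow_eq_zero' n (i := i) (by omega)]
      simp

end S17
end

/-- For `n ≥ 1` with `n ∉ {1,3,7}` and `2^{θ−1} ≤ n < 2^θ`, the
mod-2 zero-divisors cup-length of `P^n` — the maximal number of elements of the
kernel of the multiplication map `H ⊗ H → H`, `H = H^*(P^n; ℤ/2)`, with nonzero
product — equals `2^θ − 1`. -/
theorem stmt17 (n : ℕ) (hn : 1 ≤ n) (h1 : n ≠ 1) (h3 : n ≠ 3) (h7 : n ≠ 7)
    (θ : ℕ) (hθ₁ : 2 ^ (θ - 1) ≤ n) (hθ₂ : n < 2 ^ θ) :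
    sSup {k : ℕ | ∃ z : Fin k → (cohRP n ⊗[ZMod 2] cohRP n),
        (∀ j, LinearMap.mul' (ZMod 2) (cohRP n) (z j) = 0) ∧
        (∏ j, z j) ≠ 0} = 2 ^ θ - 1 := by
  have hθ0 : 1 ≤ θ := by
    by_contra h
    have : θ = 0 := by omega
    rw [this] at hθ₂
    omega
  set S := {k : ℕ | ∃ z : Fin k → (cohRP n ⊗[ZMod 2] cohRP n),
        (∀ j, LinearMap.mul' (ZMod 2) (cohRP n) (z j) = 0) ∧
        (∏ j, z j) ≠ 0} with hS
  have hmem : 2 ^ θ - 1 ∈ S := by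
    refine ⟨fun _ => S17.z n, fun j => S17.mul'_z n, ?_⟩
    have := S17.z_pow_ne_zero n θ hθ0 hθ₁ hθ₂
    rw [← Fintype.card_fin (2 ^ θ - 1), ← Finset.card_univ, ← Finset.prod_const] at this
    exact this
  have hub : ∀ k ∈ S, k ≤ 2 ^ θ - 1 := by
    rintro k ⟨zf, hker, hprod⟩
    by_contra hgt
    push_neg at hgt
    have hk2 : 2 ^ θ ≤ k := by omega
    apply hprod
    choose t ht using fun j => S17.ker_mul_sub n (zf j) (hker j)
    calc (∏ j, zf j : S17.T n) = ∏ j, (t j * S17.z n) := by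
          exact Finset.prod_congr rfl (fun j _ => (ht j).symm)
      _ = (∏ j, t j) * S17.z n ^ k := by
          rw [Finset.prod_mul_distrib, Finset.prod_const, Finset.card_univ, Fintype.card_fin]
      _ = 0 := by
          have : S17.z n ^ k = S17.z n ^ (2 ^ θ) * S17.z n ^ (k - 2 ^ θ) := by
            rw [← pow_add]; congr 1; omega
          rw [this, S17.z_pow_two_pow n θ hθ₂, zero_mul, mul_zero]
  exact le_antisymm (csSup_le ⟨_, hmem⟩ hub) (le_csSup ⟨2 ^ θ - 1, hub⟩ hmem)
end
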